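/- Let K be a field, f(x) ∈ K[x] with formal derivative f'(x) ≠ 0, and a, b ∈ K with a ≠ b. Then the polynomial (f(x) − a)(f(x) − b) has at least two simple (multiplicity-one) roots in the algebraic closure of K. -/
import Mathlib


open Polynomial

private lemma sum_count_le {L : Type*} [DecidableEq L] (M : Multiset L) (S : Finset L) :
    ∑ α ∈ S, M.count α ≤ Multiset.card M := by
  calc ∑ α ∈ S, M.count α ≤ ∑ α ∈ S ∪ M.toFinset, M.count α :=
        Finset.sum_le_sum_of_subset Finset.subset_union_left
    _ = ∑ α ∈ M.toFinset, M.count α := by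
        refine (Finset.sum_subset Finset.subset_union_right ?_).symm
        intro x _ hx
        exact Multiset.count_eq_zero_of_notMem (by simpa [Multiset.mem_toFinset] using hx)
    _ = Multiset.card M := Multiset.toFinset_sum_count_eq M

private lemma aux_alg_closed {L : Type*} [Field L] [IsAlgClosed L] [DecidableEq L]
    (p : Polynomial L) (hp : derivative p ≠ 0) (a b : L) (hab : a ≠ b) :
    ∃ α β : L, α ≠ β ∧ rootMultiplicity α ((p - C a) * (p - C b)) = 1 ∧
      rootMultiplicity β ((p - C a) * (p - C b)) = 1 := by
  set n := p.natDegree with hn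
  -- basic facts
  have hPc : ∀ c : L, p - C c ≠ 0 := by
    intro c h
    apply hp
    have : p = C c := by rwa [sub_eq_zero] at h
    rw [this]; simp
  have hprod : (p - C a) * (p - C b) ≠ 0 := mul_ne_zero (hPc a) (hPc b)
  have hdeg : ∀ c : L, (p - C c).natDegree = n := fun c => natDegree_sub_C
  have hder : ∀ c : L, derivative (p - C c) = derivative p := by intro c; simp
  have hcard : ∀ c : L, Multiset.card (p - C c).roots = n := by
    intro c
    rw [← hdeg c]
    exact splits_iff_card_roots.mp (IsAlgClosed.splits _)
  set T : L → Finset L := fun c => (p - C c).roots.toFinset with hT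
  have hmemT : ∀ c α, α ∈ T c ↔ p.eval α = c := by
    intro c α
    rw [hT]
    simp only [Multiset.mem_toFinset, mem_roots (hPc c), IsRoot, eval_sub, eval_C, sub_eq_zero]
  have hmult1 : ∀ c : L, ∀ α ∈ T c, 1 ≤ rootMultiplicity α (p - C c) := by
    intro c α hα
    refine (rootMultiplicity_pos (hPc c)).2 ?_
    simp only [IsRoot, eval_sub, eval_C, sub_eq_zero]
    exact (hmemT c α).1 hα
  have hdisj : Disjoint (T a) (T b) := by
    rw [Finset.disjoint_left]
    intro α hα hβ
    exact hab (((hmemT a α).1 hα).symm.trans ((hmemT b α).1 hβ))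
  have hsum : ∀ c : L, ∑ α ∈ T c, rootMultiplicity α (p - C c) = n := by
    intro c
    rw [← hcard c, hT]
    rw [← Multiset.toFinset_sum_count_eq (p - C c).roots]
    exact Finset.sum_congr rfl fun α _ => (count_roots _).symm
  have hA : ∀ c : L, ∑ α ∈ T c, (rootMultiplicity α (p - C c) - 1) + (T c).card = n := by
    intro c
    rw [← hsum c, Finset.card_eq_sum_ones, ← Finset.sum_add_distrib]
    refine Finset.sum_congr rfl fun α hα => ?_
    have := hmult1 c α hα
    omega
  -- bound via derivative
  have hderbound : ∀ c : L, ∑ α ∈ T c, (rootMultiplicity α (p - C c) - 1)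
      ≤ ∑ α ∈ T c, rootMultiplicity α (derivative p) := by
    intro c
    refine Finset.sum_le_sum fun α _ => ?_
    have := rootMultiplicity_sub_one_le_derivative_rootMultiplicity_of_ne_zero (p - C c) α
      (by rw [hder c]; exact hp)
    rwa [hder c] at this
  have hkey : ∑ α ∈ T a ∪ T b, rootMultiplicity α (derivative p) ≤ n - 1 := by
    calc ∑ α ∈ T a ∪ T b, rootMultiplicity α (derivative p)
        = ∑ α ∈ T a ∪ T b, (derivative p).roots.count α :=
          Finset.sum_congr rfl fun α _ => (count_roots _).symm
      _ ≤ Multiset.card (derivative p).roots := sum_count_le _ _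
      _ ≤ (derivative p).natDegree := card_roots' _
      _ ≤ n - 1 := natDegree_derivative_le p
  have hkcard : (T a).card + (T b).card ≥ n + 1 := by
    have h1 := hA a
    have h2 := hA b
    have h3 := hderbound a
    have h4 := hderbound b
    have h5 : ∑ α ∈ T a, rootMultiplicity α (derivative p)
        + ∑ α ∈ T b, rootMultiplicity α (derivative p)
        = ∑ α ∈ T a ∪ T b, rootMultiplicity α (derivative p) :=
      (Finset.sum_union hdisj).symm
    have hn1 : 1 ≤ n := by
      by_contra h
      have : n = 0 := by omega
      obtain ⟨x, hx⟩ := natDegree_eq_zero.mp this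
      exact hp (by rw [← hx]; simp)
    omega
  -- simple roots
  set S : L → Finset L := fun c => (T c).filter (fun α => rootMultiplicity α (p - C c) = 1)
    with hS
  have hscard : ∀ c : L, 2 * (T c).card ≤ n + (S c).card := by
    intro c
    have hsplit := Finset.sum_filter_add_sum_filter_not (T c)
      (fun α => rootMultiplicity α (p - C c) = 1) (fun α => rootMultiplicity α (p - C c))
    have h1 : ∑ α ∈ (T c).filter (fun α => rootMultiplicity α (p - C c) = 1),
        rootMultiplicity α (p - C c) = (S c).card := by
      rw [hS, Finset.card_eq_sum_ones]
      exact Finset.sum_congr rfl fun α hα => (Finset.mem_filter.1 hα).2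
    have h2 : 2 * ((T c).filter (fun α => ¬rootMultiplicity α (p - C c) = 1)).card
        ≤ ∑ α ∈ (T c).filter (fun α => ¬rootMultiplicity α (p - C c) = 1),
          rootMultiplicity α (p - C c) := by
      rw [Finset.card_eq_sum_ones, Finset.mul_sum]
      refine Finset.sum_le_sum fun α hα => ?_
      obtain ⟨hαT, hne⟩ := Finset.mem_filter.1 hα
      have := hmult1 c α hαT
      omega
    have h3 := Finset.card_filter_add_card_filter_not (s := T c)
      (p := fun α => rootMultiplicity α (p - C c) = 1)
    have h4 := hsum c
    have h5 : (S c).card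
        = ((T c).filter (fun α => rootMultiplicity α (p - C c) = 1)).card := rfl
    omega
  have hsimple : 2 ≤ (S a).card + (S b).card := by
    have := hscard a
    have := hscard b
    omega
  -- extract the two simple roots
  have hmem : ∀ c : L, ∀ α ∈ S c, rootMultiplicity α (p - C c) = 1 ∧ p.eval α = c := by
    intro c α hα
    obtain ⟨h1, h2⟩ := Finset.mem_filter.1 hα
    exact ⟨h2, (hmemT c α).1 h1⟩
  have hzero : ∀ c d : L, c ≠ d → ∀ α : L, p.eval α = c →
      rootMultiplicity α (p - C d) = 0 := by
    intro c d hcd α hα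
    refine rootMultiplicity_eq_zero ?_
    simp only [IsRoot, eval_sub, eval_C, hα]
    exact sub_ne_zero.2 hcd
  have hmul : ∀ α : L, rootMultiplicity α ((p - C a) * (p - C b))
      = rootMultiplicity α (p - C a) + rootMultiplicity α (p - C b) :=
    fun α => rootMultiplicity_mul hprod
  have hSa : ∀ α ∈ S a, rootMultiplicity α ((p - C a) * (p - C b)) = 1 := by
    intro α hα
    obtain ⟨h1, h2⟩ := hmem a α hα
    rw [hmul α, h1, hzero a b hab α h2]
  have hSb : ∀ α ∈ S b, rootMultiplicity α ((p - C a) * (p - C b)) = 1 := by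
    intro α hα
    obtain ⟨h1, h2⟩ := hmem b α hα
    rw [hmul α, hzero b a hab.symm α h2, h1]
  rcases (show 2 ≤ (S a).card ∨ 2 ≤ (S b).card ∨ (1 ≤ (S a).card ∧ 1 ≤ (S b).card) by
    omega) with h | h | ⟨h1, h2⟩
  · obtain ⟨α, hα, β, hβ, hne⟩ := Finset.one_lt_card.1 h
    exact ⟨α, β, hne, hSa α hα, hSa β hβ⟩
  · obtain ⟨α, hα, β, hβ, hne⟩ := Finset.one_lt_card.1 h
    exact ⟨α, β, hne, hSb α hα, hSb β hβ⟩
  · obtain ⟨α, hα⟩ := Finset.card_pos.1 h1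
    obtain ⟨β, hβ⟩ := Finset.card_pos.1 h2
    refine ⟨α, β, ?_, hSa α hα, hSb β hβ⟩
    intro h
    exact hab (((hmem a α hα).2).symm.trans (h ▸ (hmem b β hβ).2))

/-- Lemma 2.6: if `f' ≠ 0` and `a ≠ b`, then `(f - a)(f - b)` has at least two
simple roots in the algebraic closure. -/
theorem stmt4 {K : Type*} [Field K] (f : Polynomial K) (hf : derivative f ≠ 0)
    (a b : K) (hab : a ≠ b) :
    ∃ α β : AlgebraicClosure K, α ≠ β ∧
      rootMultiplicity α (((f - C a) * (f - C b)).map (algebraMap K (AlgebraicClosure K))) = 1 ∧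
      rootMultiplicity β (((f - C a) * (f - C b)).map (algebraMap K (AlgebraicClosure K))) = 1 := by
  classical
  set L := AlgebraicClosure K
  set φ := algebraMap K L with hφ
  have hinj : Function.Injective φ := (φ : K →+* L).injective
  have hder : derivative (f.map φ) = (derivative f).map φ := derivative_map f φ
  have hder0 : derivative (f.map φ) ≠ 0 := by
    rw [hder]
    exact (Polynomial.map_ne_zero_iff hinj).2 hf
  have hab' : φ a ≠ φ b := fun h => hab (hinj h)
  obtain ⟨α, β, hne, h1, h2⟩ := aux_alg_closed (f.map φ) hder0 (φ a) (φ b) hab'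
  have hmap : ((f - C a) * (f - C b)).map φ
      = (f.map φ - C (φ a)) * (f.map φ - C (φ b)) := by
    simp [Polynomial.map_mul, Polynomial.map_sub]
  exact ⟨α, β, hne, by rw [hmap]; exact h1, by rw [hmap]; exact h2⟩
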